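/- arXiv:2007.01527 — 2 statements merged into one kernel-verified Lean document; each statement's English description precedes it below -/
import Mathlib

section
/- For every λ ∈ ℝ, lim_{ε→0⁺} (ε/π^{3/2}) · ∫_{−∞}^{λ} ( ∫_ℝ e^{−s²} / ((t−s)² + ε²) ds ) dt = π^{−1/2} · ∫_{−∞}^{λ} e^{−s²} ds. (This identity computes, via Stone's formula, the vacuum spectral resolution ⟨Φ, E_λ Φ⟩ = π^{−1/2} ∫_{−∞}^{λ} e^{−s²} ds of the position operator X, where E_λ is the spectral resolution of X and Φ(x) = π^{−1/4} e^{−x²/2} is the vacuum vector.) -/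
set_option maxHeartbeats 1000000

open Real Filter MeasureTheory
open Set Topology


lemma poisson_integrable (s ε : ℝ) (hε : 0 < ε) :
    Integrable (fun t : ℝ => ((t - s) ^ 2 + ε ^ 2)⁻¹) := by
  have h1 : Integrable (fun x : ℝ => (1 + x ^ 2)⁻¹) := integrable_inv_one_add_sq
  have h2 : Integrable (fun x : ℝ => (1 + (x * ε⁻¹) ^ 2)⁻¹) :=
    h1.comp_mul_right' (inv_ne_zero hε.ne')
  have h3 : Integrable (fun t : ℝ => (1 + ((t - s) * ε⁻¹) ^ 2)⁻¹) := by
    simpa using h2.comp_sub_right s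
  have h4 := (h3.const_mul (ε⁻¹ * ε⁻¹))
  refine h4.congr (Eventually.of_forall fun t => ?_)
  have hne : (1 + ((t - s) * ε⁻¹) ^ 2) ≠ 0 := by positivity
  field_simp
  ring

lemma poisson_Iic (lam s ε : ℝ) (hε : 0 < ε) :
    ∫ t in Iic lam, ((t - s) ^ 2 + ε ^ 2)⁻¹ =
      (Real.arctan ((lam - s) / ε) + π / 2) / ε := by
  have hderiv : ∀ t ∈ Iic lam, HasDerivAt (fun t : ℝ => ε⁻¹ * Real.arctan ((t - s) * ε⁻¹))
      (((t - s) ^ 2 + ε ^ 2)⁻¹) t := by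
    intro t _
    have h1 : HasDerivAt (fun t : ℝ => (t - s) * ε⁻¹) ε⁻¹ t := by
      simpa using ((hasDerivAt_id t).sub_const s).mul_const ε⁻¹
    have h2 := (Real.hasDerivAt_arctan ((t - s) * ε⁻¹)).comp t h1
    have h3 := h2.const_mul ε⁻¹
    refine HasDerivAt.congr_deriv h3 ?_
    have hne : (1 + ((t - s) * ε⁻¹) ^ 2) ≠ 0 := by positivity
    have hε0 : ε ≠ 0 := hε.ne'
    field_simp
    ring
  have htend : Tendsto (fun t : ℝ => ε⁻¹ * Real.arctan ((t - s) * ε⁻¹)) atBot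
      (𝓝 (ε⁻¹ * (-(π / 2)))) := by
    apply Tendsto.const_mul
    have h1 : Tendsto (fun t : ℝ => (t - s) * ε⁻¹) atBot atBot :=
      (tendsto_atBot_add_const_right _ (-s) tendsto_id).atBot_mul_const (by positivity)
    exact (tendsto_nhds_of_tendsto_nhdsWithin tendsto_arctan_atBot).comp h1
  rw [integral_Iic_of_hasDerivAt_of_tendsto' hderiv
    ((poisson_integrable s ε hε).integrableOn) htend]
  rw [div_eq_mul_inv, div_eq_mul_inv, div_eq_mul_inv]
  ring

lemma gauss_integrable : Integrable (fun s : ℝ => Real.exp (-s ^ 2)) := by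
  simpa using integrable_exp_neg_mul_sq (b := 1) one_pos

lemma arctan_add_bounds (x : ℝ) : 0 ≤ Real.arctan x + π / 2 ∧ Real.arctan x + π / 2 ≤ π := by
  have h1 := Real.neg_pi_div_two_lt_arctan x
  have h2 := Real.arctan_lt_pi_div_two x
  constructor <;> linarith

lemma swap_eq (lam ε : ℝ) (hε : 0 < ε) :
    ∫ t in Iic lam, ∫ s : ℝ, Real.exp (-s ^ 2) / ((t - s) ^ 2 + ε ^ 2) =
      ∫ s : ℝ, Real.exp (-s ^ 2) * ((Real.arctan ((lam - s) / ε) + π / 2) / ε) := by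
  have hpos : ∀ t s : ℝ, (0:ℝ) < (t - s) ^ 2 + ε ^ 2 := fun t s => by positivity
  have hcont : Continuous (fun p : ℝ × ℝ =>
      Real.exp (-p.2 ^ 2) * ((p.1 - p.2) ^ 2 + ε ^ 2)⁻¹) := by
    apply Continuous.mul (by fun_prop)
    exact ((continuous_fst.sub continuous_snd).pow 2 |>.add continuous_const).inv₀
      fun p => (hpos p.1 p.2).ne'
  have hint : Integrable (Function.uncurry fun t s : ℝ =>
      Real.exp (-s ^ 2) * ((t - s) ^ 2 + ε ^ 2)⁻¹)
      ((volume.restrict (Iic lam)).prod volume) := by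
    simp only [Function.uncurry_def]
    rw [integrable_prod_iff' hcont.aestronglyMeasurable]
    constructor
    · refine Eventually.of_forall fun s => ?_
      have := ((poisson_integrable s ε hε).integrableOn (s := Iic lam)).const_mul
        (Real.exp (-s ^ 2))
      simpa using this
    · have heq : ∀ s : ℝ, (∫ t in Iic lam,
          ‖Real.exp (-s ^ 2) * ((t - s) ^ 2 + ε ^ 2)⁻¹‖) =
          Real.exp (-s ^ 2) * ((Real.arctan ((lam - s) / ε) + π / 2) / ε) := by
        intro s
        rw [← poisson_Iic lam s ε hε, ← integral_const_mul]
        refine setIntegral_congr_fun measurableSet_Iic fun t _ => ?_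
        rw [Real.norm_eq_abs, abs_of_nonneg (by positivity)]
      simp only
      refine (Integrable.congr ?_ (Eventually.of_forall fun s => (heq s).symm))
      have hb : Integrable (fun s : ℝ => Real.exp (-s ^ 2) * (π / ε)) :=
        gauss_integrable.mul_const _
      refine hb.mono ?_ (Eventually.of_forall fun s => ?_)
      · exact (Continuous.mul (by fun_prop)
          (((Real.continuous_arctan.comp (by fun_prop)).add continuous_const).div_const
            ε)).aestronglyMeasurable
      · have h1 := arctan_add_bounds ((lam - s) / ε)
        rw [Real.norm_eq_abs, Real.norm_eq_abs,
          abs_of_nonneg (mul_nonneg (Real.exp_nonneg _) (div_nonneg h1.1 hε.le)),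
          abs_of_nonneg (by positivity)]
        apply mul_le_mul_of_nonneg_left _ (Real.exp_nonneg _)
        exact (div_le_div_iff_of_pos_right hε).2 h1.2
  have := integral_integral_swap hint
  simp only [div_eq_mul_inv] at *
  rw [this]
  refine integral_congr_ae (Eventually.of_forall fun s => ?_)
  simp only
  rw [integral_const_mul, poisson_Iic lam s ε hε]
  simp [div_eq_mul_inv]

lemma dct (lam : ℝ) :
    Tendsto (fun ε : ℝ => ∫ s : ℝ,
        Real.exp (-s ^ 2) * (Real.arctan ((lam - s) / ε) + π / 2))
      (𝓝[>] (0:ℝ)) (𝓝 (π * ∫ s in Iic lam, Real.exp (-s ^ 2))) := by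
  have hind : (∫ s : ℝ, (Iic lam).indicator (fun s => π * Real.exp (-s ^ 2)) s) =
      π * ∫ s in Iic lam, Real.exp (-s ^ 2) := by
    rw [integral_indicator measurableSet_Iic, integral_const_mul]
  rw [← hind]
  apply tendsto_integral_filter_of_dominated_convergence
    (bound := fun s : ℝ => π * Real.exp (-s ^ 2))
  · refine Eventually.of_forall fun ε => ?_
    exact (Continuous.mul (by fun_prop)
      ((Real.continuous_arctan.comp (by fun_prop)).add continuous_const)).aestronglyMeasurable
  · refine Eventually.of_forall fun ε => Eventually.of_forall fun s => ?_
    have h1 := arctan_add_bounds ((lam - s) / ε)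
    rw [Real.norm_eq_abs, abs_of_nonneg (mul_nonneg (Real.exp_nonneg _) h1.1)]
    calc Real.exp (-s ^ 2) * (Real.arctan ((lam - s) / ε) + π / 2)
        ≤ Real.exp (-s ^ 2) * π := mul_le_mul_of_nonneg_left h1.2 (Real.exp_nonneg _)
      _ = π * Real.exp (-s ^ 2) := mul_comm _ _
  · exact gauss_integrable.const_mul π
  · have hne : ∀ᵐ s : ℝ, s ≠ lam := by
      refine ae_iff.2 ?_
      simpa [Set.setOf_eq_eq_singleton] using (measure_singleton lam : volume {lam} = 0)
    filter_upwards [hne] with s hs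
    rcases hs.lt_or_gt with h | h
    · have hx : Tendsto (fun ε : ℝ => (lam - s) / ε) (𝓝[>] (0:ℝ)) atTop := by
        simp only [div_eq_mul_inv]
        exact tendsto_inv_nhdsGT_zero.const_mul_atTop (by linarith)
      have ha : Tendsto (fun ε : ℝ => Real.arctan ((lam - s) / ε)) (𝓝[>] (0:ℝ))
          (𝓝 (π / 2)) := (tendsto_nhds_of_tendsto_nhdsWithin tendsto_arctan_atTop).comp hx
      have := (ha.add (tendsto_const_nhds (x := π / 2))).const_mul (Real.exp (-s ^ 2))
      rw [Set.indicator_of_mem (mem_Iic.2 h.le)]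
      convert this using 1
      ring
    · have hx : Tendsto (fun ε : ℝ => (lam - s) / ε) (𝓝[>] (0:ℝ)) atBot := by
        simp only [div_eq_mul_inv]
        exact (tendsto_const_mul_atBot_of_neg (by linarith)).2 tendsto_inv_nhdsGT_zero
      have ha : Tendsto (fun ε : ℝ => Real.arctan ((lam - s) / ε)) (𝓝[>] (0:ℝ))
          (𝓝 (-(π / 2))) := (tendsto_nhds_of_tendsto_nhdsWithin tendsto_arctan_atBot).comp hx
      have := (ha.add (tendsto_const_nhds (x := π / 2))).const_mul (Real.exp (-s ^ 2))
      rw [Set.indicator_of_notMem (by simpa using h.not_ge)]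
      convert this using 1
      ring


/-- Stone's formula computes the vacuum spectral resolution of the position
operator `X`:
`lim_{ε→0⁺} (ε/π^{3/2}) ∫_{−∞}^{λ} ∫ℝ e^{−s²}/((t−s)²+ε²) ds dt = π^{−1/2} ∫_{−∞}^{λ} e^{−s²} ds`. -/
theorem stmt_14 (lam : ℝ) :
    Filter.Tendsto
      (fun ε : ℝ =>
        ε / Real.pi ^ ((3 : ℝ) / 2) *
          ∫ t in Set.Iic lam, ∫ s : ℝ, Real.exp (-s ^ 2) / ((t - s) ^ 2 + ε ^ 2))
      (nhdsWithin 0 (Set.Ioi 0))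
      (nhds (Real.pi ^ (-(1 / 2 : ℝ)) * ∫ s in Set.Iic lam, Real.exp (-s ^ 2))) := by
  have hkey : ∀ᶠ ε in 𝓝[>] (0:ℝ),
      (π ^ ((3:ℝ)/2))⁻¹ * ∫ s : ℝ, Real.exp (-s ^ 2) * (Real.arctan ((lam - s) / ε) + π / 2) =
      ε / π ^ ((3:ℝ)/2) * ∫ t in Iic lam, ∫ s : ℝ, Real.exp (-s ^ 2) / ((t - s) ^ 2 + ε ^ 2) := by
    filter_upwards [self_mem_nhdsWithin] with ε (hε : ε ∈ Ioi 0)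
    rw [swap_eq lam ε hε]
    have : ∀ s : ℝ, Real.exp (-s ^ 2) * ((Real.arctan ((lam - s) / ε) + π / 2) / ε) =
        ε⁻¹ * (Real.exp (-s ^ 2) * (Real.arctan ((lam - s) / ε) + π / 2)) := fun s => by
      rw [div_eq_mul_inv]; ring
    simp_rw [this]
    rw [integral_const_mul]
    have h0 : (ε : ℝ) ≠ 0 := (show (0:ℝ) < ε from hε).ne'
    field_simp
  have hc : π ^ (-(1 / 2 : ℝ)) = (π ^ ((3:ℝ)/2))⁻¹ * π := by
    rw [Real.rpow_neg pi_pos.le,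
      show ((3:ℝ)/2) = (1/2 : ℝ) + 1 by norm_num, Real.rpow_add pi_pos, Real.rpow_one,
      mul_inv]
    field_simp
  have h2 := (dct lam).const_mul ((π ^ ((3:ℝ)/2))⁻¹)
  rw [hc, mul_assoc]
  exact Tendsto.congr' hkey h2
end

section
/- Let a ∈ ℂ with Im a > 0 and let g : ℝ → ℂ be continuous and bounded. Define G : ℝ → ℂ by G(s) = −i ∫_{−∞}^{s} e^{i((t²−s²)/2 − a(t−s))} g(t) dt (the integral converges absolutely since the integrand has modulus e^{Im a·(t−s)}|g(t)|). Then G is differentiable and satisfies (a − s)·G(s) + i·G′(s) = g(s) for every s ∈ ℝ; that is, G = R(a;X+P)g solves the resolvent equation (a − X − P)G = g for the operator X + P, where X is multiplication by x and P = −i d/dx. -/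
open Complex MeasureTheory


open Set in
lemma exp_mul_integrableOn_Iic {b : ℝ} (hb : 0 < b) (s : ℝ) :
    IntegrableOn (fun t : ℝ => Real.exp (b * t)) (Set.Iic s) := by
  rw [← (Measure.measurePreserving_neg (volume : Measure ℝ)).integrableOn_comp_preimage
      (Homeomorph.neg ℝ).measurableEmbedding]
  simp only [Function.comp_def, neg_preimage, neg_Iic]
  have : IntegrableOn (fun t : ℝ => Real.exp (-b * t)) (Set.Ici (-s)) := by
    rw [integrableOn_Ici_iff_integrableOn_Ioi]
    exact exp_neg_integrableOn_Ioi _ hb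
  refine this.congr_fun (fun t _ => by ring_nf) measurableSet_Ici

/-- for `Im a > 0` and continuous bounded `g`, the function
`G(s) = −i ∫_{−∞}^{s} e^{i((t²−s²)/2 − a(t−s))} g(t) dt` is differentiable and solves the
resolvent equation `(a − X − P)G = g` for `X + P` (`X` multiplication by `x`,
`P = −i d/dx`), i.e. `(a − s)·G(s) + i·G′(s) = g(s)` for all `s`. -/
theorem stmt_17 (a : ℂ) (ha : 0 < a.im) (g : ℝ → ℂ) (hg : Continuous g)
    (hbdd : ∃ C : ℝ, ∀ x : ℝ, ‖g x‖ ≤ C) (G : ℝ → ℂ)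
    (hG : ∀ s : ℝ,
      G s = -Complex.I * ∫ t in Set.Iic s,
        Complex.exp (Complex.I * (((t : ℂ) ^ 2 - (s : ℂ) ^ 2) / 2 - a * ((t : ℂ) - s))) * g t) :
    Differentiable ℝ G ∧ ∀ s : ℝ, (a - s) * G s + Complex.I * deriv G s = g s := by
  obtain ⟨C, hC⟩ := hbdd
  set f : ℝ → ℂ := fun t => Complex.exp (Complex.I * ((t : ℂ) ^ 2 / 2 - a * t)) * g t with hf
  have hf_cont : Continuous f := by fun_prop
  have hf_abs : ∀ t : ℝ, ‖f t‖ ≤ C * Real.exp (a.im * t) := by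
    intro t
    have h1 : (Complex.I * ((t : ℂ) ^ 2 / 2 - a * t)).re = a.im * t := by
      simp [Complex.mul_re, Complex.mul_im, Complex.div_re, Complex.div_im,
        ← Complex.ofReal_pow]
    calc ‖f t‖ = Real.exp (a.im * t) * ‖g t‖ := by
          rw [hf]; simp [map_mul, Complex.norm_exp, h1]
      _ ≤ Real.exp (a.im * t) * C := mul_le_mul_of_nonneg_left (hC t) (Real.exp_pos _).le
      _ = C * Real.exp (a.im * t) := by ring
  have hint : ∀ s : ℝ, IntegrableOn f (Set.Iic s) := by
    intro s
    refine Integrable.mono' (((exp_mul_integrableOn_Iic ha s)).const_mul C)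
      hf_cont.aestronglyMeasurable.restrict ?_
    filter_upwards with t using by simpa using hf_abs t
  set F : ℝ → ℂ := fun s => ∫ t in Set.Iic s, f t with hFdef
  have hGF : ∀ s : ℝ, G s = -Complex.I * Complex.exp (Complex.I * (-(s:ℂ)^2/2 + a*s)) * F s := by
    intro s
    rw [hG s]
    have hpt : ∀ t : ℝ, Complex.exp (Complex.I * (((t:ℂ)^2 - (s:ℂ)^2)/2 - a*((t:ℂ)-s))) * g t
        = Complex.exp (Complex.I * (-(s:ℂ)^2/2 + a*s)) * f t := by
      intro t; rw [hf]
      rw [← mul_assoc, ← Complex.exp_add]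
      congr 2
      ring
    rw [MeasureTheory.integral_congr_ae (Filter.Eventually.of_forall hpt),
      MeasureTheory.integral_const_mul, ← mul_assoc]
  have hF_eq : ∀ s : ℝ, F s = F 0 + ∫ t in (0:ℝ)..s, f t := by
    intro s
    have h := intervalIntegral.integral_Iic_sub_Iic (hint 0) (hint s)
    rw [hFdef]
    simp only []
    linear_combination h
  have hF' : ∀ s : ℝ, HasDerivAt F (f s) s := by
    intro s
    have h : HasDerivAt (fun u => F 0 + ∫ t in (0:ℝ)..u, f t) (f s) s := by
      refine HasDerivAt.const_add _ ?_
      exact intervalIntegral.integral_hasDerivAt_right (hf_cont.intervalIntegrable 0 s)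
        (hf_cont.stronglyMeasurableAtFilter _ _) hf_cont.continuousAt
    exact h.congr_of_eventuallyEq (Filter.Eventually.of_forall hF_eq)
  have hE' : ∀ s : ℝ, HasDerivAt (fun u : ℝ => Complex.exp (Complex.I * (-(u:ℂ)^2/2 + a*u)))
      (Complex.I * (a - s) * Complex.exp (Complex.I * (-(s:ℂ)^2/2 + a*s))) s := by
    intro s
    have h0 : HasDerivAt (fun z : ℂ => Complex.I * (-z^2/2 + a*z)) (Complex.I * (a - (s:ℂ))) (s:ℂ) := by
      have hp : HasDerivAt (fun z : ℂ => z^2) (2*(s:ℂ)) (s:ℂ) := by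
        simpa using hasDerivAt_pow 2 (s:ℂ)
      have := ((hp.neg.div_const 2).add ((hasDerivAt_id (s:ℂ)).const_mul a)).const_mul Complex.I
      refine this.congr_deriv (Eq.symm ?_)
      ring
    have := (h0.cexp).comp_ofReal (z := s)
    convert this using 1
    ring
  have hG' : ∀ s : ℝ, HasDerivAt G (Complex.I * (a - s) * G s - Complex.I * g s) s := by
    intro s
    have hE := ((hE' s).const_mul (-Complex.I)).mul (hF' s)
    have hkey : (-Complex.I * Complex.exp (Complex.I * (-(s:ℂ)^2/2 + a*s))) * f s
        = -Complex.I * g s := by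
      rw [hf]
      rw [mul_assoc, ← mul_assoc (Complex.exp _), ← Complex.exp_add]
      have h0 : Complex.I * (-(s:ℂ)^2/2 + a*s) + Complex.I * ((s:ℂ)^2/2 - a*s) = 0 := by ring
      rw [h0, Complex.exp_zero, one_mul]
    have h2 : HasDerivAt (fun u : ℝ => -Complex.I * Complex.exp (Complex.I * (-(u:ℂ)^2/2 + a*u)) * F u)
        (Complex.I * (a - s) * G s - Complex.I * g s) s := by
      refine hE.congr_deriv (Eq.symm ?_)
      rw [hGF s]
      linear_combination -hkey
    exact h2.congr_of_eventuallyEq (Filter.Eventually.of_forall hGF)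
  refine ⟨fun s => (hG' s).differentiableAt, fun s => ?_⟩
  rw [(hG' s).deriv]
  linear_combination ((a - (s:ℂ)) * G s - g s) * Complex.I_mul_I
end
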